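/- Let d ≥ 1 be an integer and c, δ, h₀ real numbers with 0 < c·h₀ < c·δ ≤ 1. Then every complex root of p(λ) = λ^{d+1} − (1 − cδ)λᵈ − c·h₀ satisfies |λ| < 1. -/

import Mathlib

/-- If `0 < ch₀ < cδ ≤ 1`, every complex root of
`p(λ) = λ^{d+1} − (1 − cδ)λᵈ − ch₀` lies strictly inside the unit circle. -/
theorem nonconsensus_mode_roots_inside_unit_circle (d : ℕ) (hd : 1 ≤ d)
    (c δ h₀ : ℝ) (h1 : 0 < c * h₀) (h2 : c * h₀ < c * δ) (h3 : c * δ ≤ 1) :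
    ∀ lam : ℂ,
      lam ^ (d + 1) - (1 - (c * δ : ℝ)) * lam ^ d - (c * h₀ : ℝ) = 0 →
        ‖lam‖ < 1 := by
  intro lam heq
  by_contra hge
  push_neg at hge
  have key : lam ^ d * (lam - ((1 - c * δ : ℝ) : ℂ)) = ((c * h₀ : ℝ) : ℂ) := by
    push_cast at heq ⊢
    ring_nf
    ring_nf at heq
    linear_combination heq
  have habs : ‖lam‖ ^ d * ‖lam - ((1 - c * δ : ℝ) : ℂ)‖ = c * h₀ := by
    have := congrArg (‖·‖) key
    rwa [norm_mul, norm_pow, Complex.norm_real, Real.norm_of_nonneg h1.le] at this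
  have ha : (0:ℝ) ≤ 1 - c * δ := by linarith
  have h4 : ‖lam - ((1 - c * δ : ℝ) : ℂ)‖ ≥ ‖lam‖ - (1 - c * δ) := by
    have := norm_sub_norm_le lam ((1 - c * δ : ℝ) : ℂ)
    rw [Complex.norm_real, Real.norm_of_nonneg ha] at this
    linarith
  have h5 : ‖lam‖ - (1 - c * δ) ≥ c * δ := by linarith
  have h6 : (1:ℝ) ≤ ‖lam‖ ^ d := one_le_pow₀ hge
  nlinarith [habs, h4, h5, h6]
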